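/- Let q ∈ ℂ with 0 < |q| < 1. With m(x,q,z) defined as the Appell–Lerch series (1/j(z;q)) · Σ_{r ∈ ℤ} (-1)^r q^{r(r-1)/2} z^r / (1 - q^{r-1} x z), one has m(q, q², -1) = 1/2. -/

import Mathlib

noncomputable def qPoch (x q : ℂ) : ℂ := ∏' k : ℕ, (1 - x * q ^ k)

noncomputable def jP (z q : ℂ) : ℂ := qPoch z q * qPoch (q / z) q * qPoch q q

noncomputable def mAL (x q z : ℂ) : ℂ :=
  (1 / jP z q) * ∑' r : ℤ, ((-1 : ℂ) ^ r * q ^ (r * (r - 1) / 2) * z ^ r) /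
    (1 - q ^ (r - 1) * x * z)

open Finset Filter Topology

/-- `1 - ∑ x ≤ ∏ (1 - x)` for `x i ∈ [0,1]`. -/
lemma one_sub_sum_le_prod_one_sub' (s : Finset ℕ) (x : ℕ → ℝ)
    (h0 : ∀ i ∈ s, 0 ≤ x i) (h1 : ∀ i ∈ s, x i ≤ 1) :
    1 - ∑ i ∈ s, x i ≤ ∏ i ∈ s, (1 - x i) := by
  classical
  induction s using Finset.cons_induction with
  | empty => simp
  | cons a s ha ih =>
    rw [Finset.sum_cons, Finset.prod_cons]
    have hxa0 : 0 ≤ x a := h0 a (Finset.mem_cons_self a s)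
    have hxa1 : x a ≤ 1 := h1 a (Finset.mem_cons_self a s)
    have ihs := ih (fun i hi => h0 i (Finset.mem_cons_of_mem hi))
      (fun i hi => h1 i (Finset.mem_cons_of_mem hi))
    have hs0 : 0 ≤ ∑ i ∈ s, x i := Finset.sum_nonneg fun i hi => h0 i (Finset.mem_cons_of_mem hi)
    nlinarith [Finset.sum_nonneg fun i hi => h0 i (Finset.mem_cons_of_mem hi)]

lemma prod_one_add_le_exp (a : ℝ) (ha0 : 0 ≤ a) (ha1 : a < 1) (m : ℕ) :
    ∏ i ∈ range m, (1 + a ^ (i + 1)) ≤ Real.exp (a / (1 - a)) := by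
  have h1 : ∏ i ∈ range m, (1 + a ^ (i + 1)) ≤ ∏ i ∈ range m, Real.exp (a ^ (i + 1)) := by
    apply Finset.prod_le_prod
    · intro i _; positivity
    · intro i _; linarith [Real.add_one_le_exp (a ^ (i + 1))]
  rw [← Real.exp_sum] at h1
  refine h1.trans (Real.exp_le_exp.2 ?_)
  have : ∑ i ∈ range m, a ^ (i + 1) = a * ∑ i ∈ range m, a ^ i := by
    rw [Finset.mul_sum]; exact Finset.sum_congr rfl fun i _ => by ring
  rw [this]
  have hge : ∑ i ∈ range m, a ^ i ≤ (1 - a)⁻¹ := by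
    have := tsum_geometric_of_lt_one ha0 ha1
    calc ∑ i ∈ range m, a ^ i ≤ ∑' i : ℕ, a ^ i :=
          Summable.sum_le_tsum _ (fun i _ => by positivity) (summable_geometric_of_lt_one ha0 ha1)
      _ = (1 - a)⁻¹ := this
  calc a * ∑ i ∈ range m, a ^ i ≤ a * (1 - a)⁻¹ := by
        apply mul_le_mul_of_nonneg_left hge ha0
    _ = a / (1 - a) := by rw [div_eq_mul_inv]

lemma exists_prod_one_sub_lb (a : ℝ) (ha0 : 0 ≤ a) (ha1 : a < 1) :
    ∃ c : ℝ, 0 < c ∧ ∀ m : ℕ, c ≤ ∏ i ∈ range m, (1 - a ^ (i + 1)) := by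
  -- choose K with tail sum ≤ 1/2
  have hsum : Summable (fun i : ℕ => a ^ (i + 1)) :=
    (summable_geometric_of_lt_one ha0 ha1).comp_injective (add_left_injective 1)
  have htail : Tendsto (fun K => ∑' i : ℕ, a ^ (i + K + 1)) atTop (𝓝 0) := by
    simpa using (tendsto_sum_nat_add (fun i => a ^ (i + 1)))
  obtain ⟨K, hK⟩ : ∃ K : ℕ, ∑' i : ℕ, a ^ (i + K + 1) ≤ 1 / 2 := by
    have := (htail.eventually (eventually_le_nhds (by norm_num : (0:ℝ) < 1/2)))
    exact this.exists
  have hfac0 : ∀ i : ℕ, 0 < 1 - a ^ (i + 1) := by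
    intro i
    have : a ^ (i + 1) < 1 := pow_lt_one₀ ha0 ha1 (Nat.succ_ne_zero i)
    linarith
  have hposK : 0 < ∏ i ∈ range K, (1 - a ^ (i + 1)) :=
    Finset.prod_pos (fun i _ => hfac0 i)
  refine ⟨(∏ i ∈ range K, (1 - a ^ (i + 1))) * (1 / 2), by positivity, fun m => ?_⟩
  rcases le_or_gt m K with hmK | hKm
  · have h1 : ∏ i ∈ range K, (1 - a ^ (i + 1)) ≤ ∏ i ∈ range m, (1 - a ^ (i + 1)) := by
      rw [← Finset.prod_range_mul_prod_Ico _ hmK]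
      have : ∏ i ∈ Finset.Ico m K, (1 - a ^ (i + 1)) ≤ 1 := by
        apply Finset.prod_le_one
        · intro i _; exact (hfac0 i).le
        · intro i _; nlinarith [pow_nonneg ha0 (i+1)]
      nlinarith [Finset.prod_pos (fun i (_ : i ∈ range m) => hfac0 i),
        Finset.prod_pos (fun i (_ : i ∈ range K) => hfac0 i)]
    nlinarith [Finset.prod_pos (fun i (_ : i ∈ range K) => hfac0 i)]
  · rw [← Finset.prod_range_mul_prod_Ico _ hKm.le]
    have h2 : 1 / 2 ≤ ∏ i ∈ Finset.Ico K m, (1 - a ^ (i + 1)) := by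
      have hlb := one_sub_sum_le_prod_one_sub' (Finset.Ico K m) (fun i => a ^ (i + 1))
        (fun i _ => by positivity) (fun i _ => by nlinarith [hfac0 i])
      have hsumle : ∑ i ∈ Finset.Ico K m, a ^ (i + 1) ≤ ∑' i : ℕ, a ^ (i + K + 1) := by
        have : ∑ i ∈ Finset.Ico K m, a ^ (i + 1) = ∑ i ∈ range (m - K), a ^ (i + K + 1) := by
          rw [Finset.sum_Ico_eq_sum_range]
          apply Finset.sum_congr rfl
          intro i _; ring_nf
        rw [this]
        exact Summable.sum_le_tsum _ (fun i _ => by positivity)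
          ((summable_geometric_of_lt_one ha0 ha1).comp_injective
            (fun x y h => by omega))
      linarith
    have := Finset.prod_pos (fun i (_ : i ∈ range K) => hfac0 i)
    nlinarith


lemma Eexp_nonneg (r : ℤ) : 0 ≤ r * (r - 1) := by nlinarith [sq_nonneg r, sq_nonneg (2*r-1)]

lemma summable_pow_tri (a : ℝ) (ha0 : 0 < a) (ha1 : a < 1) :
    Summable (fun r : ℤ => a ^ (r * (r - 1) / 2).toNat) := by
  have hgeo : Summable (fun n : ℕ => a⁻¹ * a ^ n) :=
    (summable_geometric_of_lt_one ha0.le ha1).mul_left _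
  have key : ∀ s : ℤ → ℤ, (∀ n : ℕ, (n : ℤ) - 1 ≤ s n) →
      Summable (fun n : ℕ => a ^ (s n).toNat) := by
    intro s hs
    apply Summable.of_nonneg_of_le (fun n => by positivity) _ hgeo
    intro n
    have h1 : n - 1 ≤ (s n).toNat := by
      have := hs n; omega
    calc a ^ (s n).toNat ≤ a ^ (n - 1) :=
          pow_le_pow_of_le_one ha0.le ha1.le h1
      _ ≤ a⁻¹ * a ^ n := by
          rcases Nat.eq_zero_or_pos n with h | h
          · subst h; simp; rw [inv_eq_one_div]
            rw [le_div_iff₀ ha0]; nlinarith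
          · have : a ^ (n - 1) = a⁻¹ * a ^ n := by
              rw [eq_comm, inv_mul_eq_iff_eq_mul₀ (ne_of_gt ha0), ← pow_succ']
              congr 1; omega
            rw [this]
  apply Summable.of_nat_of_neg
  · apply key (fun r => r * (r - 1) / 2)
    intro n
    have h2 : ((n : ℤ) - 1) * 2 ≤ (n : ℤ) * ((n : ℤ) - 1) := by
      rcases Nat.lt_or_ge n 2 with h | h
      · interval_cases n <;> norm_num
      · have : (2 : ℤ) ≤ (n : ℤ) := by exact_mod_cast h
        nlinarith
    omega
  · apply key (fun r => (-r) * ((-r) - 1) / 2)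
    intro n
    have h2 : ((n : ℤ) - 1) * 2 ≤ (-(n:ℤ)) * (-(n:ℤ) - 1) := by
      nlinarith [Int.ofNat_nonneg n, sq_nonneg ((n:ℤ) - 1)]
    omega

lemma summable_cpow_tri (t : ℂ) (ht0 : 0 < ‖t‖) (ht : ‖t‖ < 1) :
    Summable (fun r : ℤ => t ^ (r * (r - 1) / 2).toNat) := by
  apply Summable.of_norm
  simpa [norm_pow] using summable_pow_tri ‖t‖ ht0 ht


/-- Gaussian binomial coefficient as a complex number, via Pascal recursion. -/
def gbc (t : ℂ) : ℕ → ℕ → ℂ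
  | 0, 0 => 1
  | 0, _ + 1 => 0
  | _ + 1, 0 => 1
  | n + 1, k + 1 => gbc t n (k + 1) + t ^ (n - k) * gbc t n k

lemma gbc_zero_right (t : ℂ) (n : ℕ) : gbc t n 0 = 1 := by
  cases n <;> rfl

lemma gbc_eq_zero (t : ℂ) {n k : ℕ} (h : n < k) : gbc t n k = 0 := by
  induction n generalizing k with
  | zero => obtain ⟨k, rfl⟩ := Nat.exists_eq_add_of_lt h; simp [gbc]
  | succ n ih =>
    obtain ⟨k, rfl⟩ := Nat.exists_eq_succ_of_ne_zero (by omega : k ≠ 0)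
    show gbc t n (k + 1) + t ^ (n - k) * gbc t n k = 0
    rw [ih (by omega), ih (by omega)]
    ring

lemma gbc_diag (t : ℂ) (n : ℕ) : gbc t n n = 1 := by
  induction n with
  | zero => rfl
  | succ n ih =>
    show gbc t n (n + 1) + t ^ (n - n) * gbc t n n = 1
    rw [gbc_eq_zero t (by omega), ih]
    simp

/-- Partial products of the q-Pochhammer `(t;t)_m`. -/
noncomputable def Ppart (t : ℂ) (m : ℕ) : ℂ := ∏ i ∈ range m, (1 - t ^ (i + 1))

lemma Ppart_succ (t : ℂ) (m : ℕ) : Ppart t (m + 1) = Ppart t m * (1 - t ^ (m + 1)) :=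
  Finset.prod_range_succ _ _

lemma one_sub_pow_ne {t : ℂ} (ht : ‖t‖ < 1) {m : ℕ} (hm : m ≠ 0) : 1 - t ^ m ≠ 0 := by
  intro h
  have : t ^ m = 1 := by linear_combination -h
  have : ‖t ^ m‖ = 1 := by rw [this, norm_one]
  rw [norm_pow] at this
  have h0 : 0 ≤ ‖t‖ := norm_nonneg t
  have := pow_lt_one₀ h0 ht hm
  linarith

lemma Ppart_ne_zero {t : ℂ} (ht : ‖t‖ < 1) (m : ℕ) : Ppart t m ≠ 0 :=
  Finset.prod_ne_zero_iff.2 fun i _ => one_sub_pow_ne ht (Nat.succ_ne_zero i)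

lemma gbc_mul_eq {t : ℂ} (ht : ‖t‖ < 1) : ∀ n k : ℕ, k ≤ n →
    gbc t n k * (Ppart t k * Ppart t (n - k)) = Ppart t n := by
  intro n
  induction n with
  | zero => intro k hk; interval_cases k; simp [gbc, Ppart]
  | succ n ih =>
    intro k hk
    rcases Nat.eq_zero_or_pos k with rfl | hk0
    · simp [gbc_zero_right, Ppart]
    obtain ⟨k, rfl⟩ := Nat.exists_eq_succ_of_ne_zero (by omega : k ≠ 0)
    rcases Nat.eq_or_lt_of_le hk with heq | hlt
    · have : k = n := by omega
      subst this
      rw [gbc_diag]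
      simp [Ppart]
    · have hkn : k + 1 ≤ n := by omega
      show (gbc t n (k + 1) + t ^ (n - k) * gbc t n k) *
          (Ppart t (k + 1) * Ppart t (n + 1 - (k + 1))) = Ppart t (n + 1)
      have hPn : Ppart t n ≠ 0 := Ppart_ne_zero ht n
      have hPk : Ppart t k ≠ 0 := Ppart_ne_zero ht k
      have hPC : Ppart t (n - (k + 1)) ≠ 0 := Ppart_ne_zero ht _
      have hv : (1 : ℂ) - t ^ (k + 1) ≠ 0 := one_sub_pow_ne ht (by omega)
      have hu : (1 : ℂ) - t ^ (n - k) ≠ 0 := one_sub_pow_ne ht (by omega)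
      have e1 : n + 1 - (k + 1) = (n - (k + 1)) + 1 := by omega
      have e2 : (n - (k + 1)) + 1 = n - k := by omega
      have eNK : Ppart t (n - k) = Ppart t (n - (k + 1)) * (1 - t ^ (n - k)) := by
        conv_lhs => rw [← e2, Ppart_succ, e2]
      have IH1 : gbc t n (k + 1) =
          Ppart t n / (Ppart t (k + 1) * Ppart t (n - (k + 1))) := by
        rw [eq_div_iff (by exact mul_ne_zero (Ppart_ne_zero ht _) hPC)]
        exact ih (k + 1) hkn
      have IH2 : gbc t n k = Ppart t n / (Ppart t k * Ppart t (n - k)) := by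
        rw [eq_div_iff (by exact mul_ne_zero hPk (Ppart_ne_zero ht _))]
        exact ih k (by omega)
      have hrel : t ^ (n - k) * t ^ k = t ^ n := by
        rw [← pow_add]; congr 1; omega
      rw [IH1, IH2, e1, Ppart_succ t (n - (k+1)), e2, eNK,
        Ppart_succ t k, Ppart_succ t n, pow_succ t n, ← hrel]
      field_simp
      ring


lemma gbc_succ_succ (t : ℂ) (n k : ℕ) :
    gbc t (n + 1) (k + 1) = gbc t n (k + 1) + t ^ (n - k) * gbc t n k := rfl

lemma tri_succ (j : ℕ) : (j + 1) * j / 2 = j * (j - 1) / 2 + j := by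
  have h : (j + 1) * j = j * (j - 1) + j * 2 := by
    cases j with
    | zero => rfl
    | succ j => simp only [Nat.add_sub_cancel]; ring
  rw [h, Nat.add_mul_div_right _ _ (by norm_num : 0 < 2)]

theorem qbinom (t : ℂ) (n : ℕ) (z : ℂ) :
    ∏ k ∈ range n, (1 + z * t ^ k) =
      ∑ j ∈ range (n + 1), t ^ (j * (j - 1) / 2) * gbc t n j * z ^ j := by
  induction n with
  | zero => simp [gbc]
  | succ n ih =>
    have key : ∀ j ∈ range (n + 1),
        t ^ ((j+1) * ((j+1) - 1) / 2) * gbc t (n + 1) (j + 1) * z ^ (j + 1)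
        = t ^ ((j+1) * j / 2) * gbc t n (j + 1) * z ^ (j + 1)
          + t ^ n * (t ^ (j * (j - 1) / 2) * gbc t n j * z ^ j) * z := by
      intro j hj
      have hjn : j ≤ n := by simpa using Nat.lt_succ_iff.mp (mem_range.mp hj)
      rw [gbc_succ_succ]
      have e1 : (j + 1) - 1 = j := rfl
      rw [e1, tri_succ]
      have e2 : t ^ (j * (j-1) / 2 + j) * (t ^ (n - j) * gbc t n j) * z ^ (j+1)
          = t ^ n * (t ^ (j * (j - 1) / 2) * gbc t n j * z ^ j) * z := by
        rw [pow_add, pow_succ]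
        have : t ^ j * t ^ (n - j) = t ^ n := by rw [← pow_add]; congr 1; omega
        calc t ^ (j * (j-1)/2) * t ^ j * (t ^ (n - j) * gbc t n j) * (z ^ j * z)
            = (t ^ j * t ^ (n - j)) * (t ^ (j * (j-1)/2) * gbc t n j * z ^ j) * z := by ring
          _ = _ := by rw [this]
      rw [mul_add, add_mul, e2]
    calc ∏ k ∈ range (n + 1), (1 + z * t ^ k)
        = (∑ j ∈ range (n + 1), t ^ (j * (j - 1) / 2) * gbc t n j * z ^ j)
            * (1 + z * t ^ n) := by rw [prod_range_succ, ih]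
      _ = ∑ j ∈ range (n + 1 + 1), t ^ (j * (j - 1) / 2) * gbc t (n + 1) j * z ^ j := by
        rw [Finset.sum_range_succ' (fun j => t ^ (j * (j - 1) / 2) * gbc t (n + 1) j * z ^ j) (n+1)]
        rw [Finset.sum_congr rfl key, Finset.sum_add_distrib]
        have hS0 : ∑ j ∈ range (n + 1 + 1), t ^ (j * (j - 1) / 2) * gbc t n j * z ^ j
            = ∑ j ∈ range (n + 1), t ^ (j * (j - 1) / 2) * gbc t n j * z ^ j := by
          rw [Finset.sum_range_succ, gbc_eq_zero t (by omega)]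
          simp
        have hS1 : ∑ j ∈ range (n + 1 + 1), t ^ (j * (j - 1) / 2) * gbc t n j * z ^ j
            = (∑ j ∈ range (n + 1), t ^ ((j+1) * j / 2) * gbc t n (j + 1) * z ^ (j + 1)) + 1 := by
          rw [Finset.sum_range_succ' (fun j => t ^ (j * (j - 1) / 2) * gbc t n j * z ^ j)]
          simp [gbc_zero_right]
        have hS2 : ∑ j ∈ range (n + 1), t ^ n * (t ^ (j * (j - 1) / 2) * gbc t n j * z ^ j) * z
            = (∑ j ∈ range (n + 1), t ^ (j * (j - 1) / 2) * gbc t n j * z ^ j) * (z * t ^ n) := by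
          rw [Finset.sum_mul]
          exact Finset.sum_congr rfl fun j _ => by ring
        have hf0 : t ^ (0 * (0 - 1) / 2) * gbc t (n + 1) 0 * z ^ 0 = 1 := by
          simp [gbc_zero_right]
        linear_combination hS1 - hS0 - hS2 - hf0


lemma summable_log_one_sub (x t : ℂ) (ht : ‖t‖ < 1) :
    Summable (fun k : ℕ => Complex.log (1 - x * t ^ k)) := by
  apply Summable.of_norm_bounded_eventually_nat (g := fun k => 3 / 2 * (‖x‖ * ‖t‖ ^ k))
  · exact ((summable_geometric_of_lt_one (norm_nonneg t) ht).mul_left _).mul_left _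
  · have h0 : Tendsto (fun k : ℕ => ‖x‖ * ‖t‖ ^ k) atTop (𝓝 0) := by
      simpa using (tendsto_pow_atTop_nhds_zero_of_lt_one (norm_nonneg t) ht).const_mul ‖x‖
    filter_upwards [h0.eventually (eventually_le_nhds (by norm_num : (0:ℝ) < 1/2))] with k hk
    have hnorm : ‖-(x * t ^ k)‖ ≤ 1 / 2 := by
      rw [norm_neg, norm_mul, norm_pow]; exact hk
    have := Complex.norm_log_one_add_half_le_self hnorm
    rw [show (1 : ℂ) + -(x * t ^ k) = 1 - x * t ^ k by ring] at this
    refine this.trans ?_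
    rw [norm_neg, norm_mul, norm_pow]

lemma multipliable_one_sub (x t : ℂ) (ht : ‖t‖ < 1)
    (hne : ∀ k : ℕ, 1 - x * t ^ k ≠ 0) :
    Multipliable (fun k : ℕ => 1 - x * t ^ k) := by
  exact Complex.multipliable_of_summable_log (summable_log_one_sub x t ht)

lemma tprod_one_sub_ne_zero (x t : ℂ) (ht : ‖t‖ < 1)
    (hne : ∀ k : ℕ, 1 - x * t ^ k ≠ 0) :
    (∏' k : ℕ, (1 - x * t ^ k)) ≠ 0 := by
  have h2 := Complex.cexp_tsum_eq_tprod (f := fun k => 1 - x * t ^ k) hne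
    (summable_log_one_sub x t ht)
  rw [← h2]
  exact Complex.exp_ne_zero _

lemma tendsto_prod_one_sub (x t : ℂ) (ht : ‖t‖ < 1)
    (hne : ∀ k : ℕ, 1 - x * t ^ k ≠ 0) :
    Tendsto (fun n => ∏ k ∈ range n, (1 - x * t ^ k)) atTop
      (𝓝 (∏' k : ℕ, (1 - x * t ^ k))) :=
  (multipliable_one_sub x t ht hne).hasProd.tendsto_prod_nat


noncomputable def QQpart (t : ℂ) (m : ℕ) : ℂ := ∏ i ∈ range m, (1 + t ^ (i + 1))

lemma nat_tri_even (j : ℕ) : 2 * (j * (j - 1) / 2) = j * (j - 1) := by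
  rcases Nat.even_or_odd j with h | h
  · obtain ⟨m, rfl⟩ := h
    have h2 : (m + m) * (m + m - 1) = 2 * (m * (m + m - 1)) := by
      rw [← two_mul, mul_assoc]
    omega
  · obtain ⟨m, rfl⟩ := h
    have : (2 * m + 1) * (2 * m + 1 - 1) = 2 * ((2 * m + 1) * m) := by
      simp only [Nat.add_sub_cancel]; ring
    omega

lemma int_tri_even (r : ℤ) : 2 * (r * (r - 1) / 2) = r * (r - 1) := by
  obtain ⟨u, hu⟩ : Even (r * (r - 1)) := by
    simpa [mul_comm] using Int.even_mul_succ_self (r - 1)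
  rw [hu]; omega

lemma int_tri_nonneg (r : ℤ) : 0 ≤ r * (r - 1) / 2 := by
  have h : 0 ≤ r * (r - 1) := by nlinarith [sq_nonneg (2 * r - 1)]
  positivity

lemma cast_tri (j : ℕ) : ((j * (j - 1) / 2 : ℕ) : ℤ) = (j : ℤ) * ((j : ℤ) - 1) / 2 := by
  have h1 := nat_tri_even j
  have h2 := int_tri_even (j : ℤ)
  have hcast : ((j * (j - 1) : ℕ) : ℤ) = (j : ℤ) * ((j : ℤ) - 1) := by
    cases j with
    | zero => simp
    | succ m => push_cast; ring
  have h3 : 2 * ((j * (j - 1) / 2 : ℕ) : ℤ) = (j : ℤ) * ((j : ℤ) - 1) := by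
    rw [← hcast]; exact_mod_cast congrArg (Nat.cast : ℕ → ℤ) h1
  linarith

lemma cast_tri' (N : ℕ) : ((N * (N + 1) / 2 : ℕ) : ℤ) = (N : ℤ) * ((N : ℤ) + 1) / 2 := by
  have h1 : ((N + 1) * ((N + 1) - 1) / 2 : ℕ) = N * (N + 1) / 2 := by
    simp only [Nat.add_sub_cancel]; rw [Nat.mul_comm]
  have := cast_tri (N + 1)
  rw [h1] at this
  rw [this]
  push_cast
  rw [show ((N : ℤ) + 1) * ((N : ℤ) + 1 - 1) = (N : ℤ) * ((N : ℤ) + 1) by ring]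

lemma int_tri_shift (x y : ℤ) :
    x * (x - 1) / 2 - y * x + y * (y + 1) / 2 = (x - y) * (x - y - 1) / 2 := by
  obtain ⟨u, hu⟩ : Even (x * (x - 1)) := by
    simpa [mul_comm] using Int.even_mul_succ_self (x - 1)
  obtain ⟨v, hv⟩ : Even (y * (y + 1)) := Int.even_mul_succ_self y
  obtain ⟨w, hw⟩ : Even ((x - y) * (x - y - 1)) := by
    simpa [mul_comm] using Int.even_mul_succ_self (x - y - 1)
  have hu2 : x * (x - 1) / 2 = u := by omega
  have hv2 : y * (y + 1) / 2 = v := by omega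
  have hw2 : (x - y) * (x - y - 1) / 2 = w := by omega
  rw [hu2, hv2, hw2]
  nlinarith [hu, hv, hw]

lemma finite_jtp (t : ℂ) (ht0 : t ≠ 0) (N : ℕ) (hN : 1 ≤ N) :
    ∑ r ∈ Finset.Icc (-(N : ℤ)) N,
        gbc t (2 * N) ((N + r).toNat) * t ^ ((r * (r - 1) / 2).toNat)
      = 2 * QQpart t N * QQpart t (N - 1) := by
  have hqb := qbinom t (2 * N) (t ^ (-(N : ℤ)))
  set z : ℂ := t ^ (-(N : ℤ)) with hz
  set TN : ℕ := N * (N + 1) / 2 with hTN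
  have hzpow : ∀ k : ℕ, z * t ^ k = t ^ ((k : ℤ) - N) := by
    intro k
    rw [hz, ← zpow_natCast t k, ← zpow_add₀ ht0]
    congr 1; omega
  -- LHS evaluation
  have hlhs : (∏ k ∈ range (2 * N), (1 + z * t ^ k)) * t ^ TN
      = QQpart t N * (2 * QQpart t (N - 1)) := by
    rw [two_mul, Finset.prod_range_add]
    have hB : ∏ k ∈ range N, (1 + z * t ^ (N + k)) = 2 * QQpart t (N - 1) := by
      have h1 : ∀ k ∈ range N, (1 + z * t ^ (N + k)) = 1 + t ^ k := by
        intro k _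
        rw [hzpow (N + k)]
        congr 1
        rw [← zpow_natCast t k]
        congr 1; omega
      rw [Finset.prod_congr rfl h1]
      obtain ⟨M, rfl⟩ := Nat.exists_eq_succ_of_ne_zero (by omega : N ≠ 0)
      rw [Finset.prod_range_succ' (fun k => 1 + t ^ k) M]
      simp only [pow_zero, Nat.succ_sub_one]
      rw [QQpart]
      ring
    have hTNsum : ∑ k ∈ range N, (N - k) = TN := by
      have h1 : ∑ k ∈ range N, (N - k) = ∑ k ∈ range N, (k + 1) := by
        rw [← Finset.sum_range_reflect (fun k => k + 1) N]
        apply Finset.sum_congr rfl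
        intro k hk
        have := Finset.mem_range.mp hk
        omega
      rw [h1, Finset.sum_add_distrib, Finset.sum_range_id, Finset.sum_const,
        Finset.card_range, smul_eq_mul, mul_one]
      have h2 : N * (N - 1) + 2 * N = N * (N + 1) := by
        cases N with
        | zero => rfl
        | succ n => simp only [Nat.add_sub_cancel]; ring
      have h3 := nat_tri_even N
      have h4 : 2 * (N * (N + 1) / 2) = N * (N + 1) := by
        have h5 := nat_tri_even (N + 1)
        simp only [Nat.add_sub_cancel] at h5
        have h6 : (N + 1) * N = N * (N + 1) := Nat.mul_comm _ _
        omega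
      omega
    have hA : (∏ k ∈ range N, (1 + z * t ^ k)) * t ^ TN = QQpart t N := by
      rw [← hTNsum, ← Finset.prod_pow_eq_pow_sum, ← Finset.prod_mul_distrib]
      have h1 : ∀ k ∈ range N, (1 + z * t ^ k) * t ^ (N - k) = 1 + t ^ (N - k) := by
        intro k hk
        have hkN := Finset.mem_range.mp hk
        rw [hzpow k, add_mul, one_mul, ← zpow_natCast t (N - k), ← zpow_add₀ ht0]
        rw [show (k : ℤ) - N + ((N - k : ℕ) : ℤ) = 0 by omega, zpow_zero]
        ring
      rw [Finset.prod_congr rfl h1]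
      rw [← Finset.prod_range_reflect (fun k => 1 + t ^ (N - k)) N]
      rw [QQpart]
      apply Finset.prod_congr rfl
      intro k hk
      have := Finset.mem_range.mp hk
      congr 2
      omega
    calc (∏ k ∈ range N, (1 + z * t ^ k)) * (∏ k ∈ range N, (1 + z * t ^ (N + k))) * t ^ TN
        = ((∏ k ∈ range N, (1 + z * t ^ k)) * t ^ TN) *
            (∏ k ∈ range N, (1 + z * t ^ (N + k))) := by ring
      _ = QQpart t N * (2 * QQpart t (N - 1)) := by rw [hA, hB]
  -- RHS evaluation
  have hrhs : (∑ j ∈ range (2 * N + 1), t ^ (j * (j - 1) / 2) * gbc t (2 * N) j * z ^ j) * t ^ TN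
      = ∑ r ∈ Finset.Icc (-(N : ℤ)) N,
          gbc t (2 * N) ((N + r).toNat) * t ^ ((r * (r - 1) / 2).toNat) := by
    rw [Finset.sum_mul]
    refine Finset.sum_nbij' (fun j => (j : ℤ) - N) (fun r => (N + r).toNat) ?_ ?_ ?_ ?_ ?_
    · intro j hj
      have := Finset.mem_range.mp hj
      beta_reduce
      rw [Finset.mem_Icc]
      omega
    · intro r hr
      rw [Finset.mem_Icc] at hr
      beta_reduce
      rw [Finset.mem_range]
      omega
    · intro j hj; have := Finset.mem_range.mp hj; beta_reduce; omega
    · intro r hr; rw [Finset.mem_Icc] at hr; beta_reduce; omega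
    · intro j hj
      have hjN := Finset.mem_range.mp hj
      have e1 : (N + ((j : ℤ) - N)).toNat = j := by omega
      rw [e1]
      -- exponent juggling
      have e2 : t ^ (j * (j - 1) / 2) * gbc t (2 * N) j * z ^ j * t ^ TN
          = gbc t (2 * N) j * (t ^ (j * (j - 1) / 2) * z ^ j * t ^ TN) := by ring
      rw [e2]
      congr 1
      have hzj : z ^ j = t ^ (-(N : ℤ) * j) := by
        rw [hz, ← zpow_natCast (t ^ (-(N:ℤ))) j, ← zpow_mul]
      rw [hzj, ← zpow_natCast t (j * (j - 1) / 2), ← zpow_natCast t TN,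
        ← zpow_add₀ ht0, ← zpow_add₀ ht0]
      have hexp : ((j * (j - 1) / 2 : ℕ) : ℤ) + (-(N : ℤ) * j) + ((TN : ℕ) : ℤ)
          = ((j : ℤ) - N) * (((j : ℤ) - N) - 1) / 2 := by
        rw [cast_tri j, hTN, cast_tri' N]
        have := int_tri_shift (j : ℤ) (N : ℤ)
        linarith
      rw [hexp, ← zpow_natCast t ((((j : ℤ) - N) * ((j : ℤ) - N - 1) / 2).toNat),
        Int.toNat_of_nonneg (int_tri_nonneg _)]
  calc ∑ r ∈ Finset.Icc (-(N : ℤ)) N,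
        gbc t (2 * N) ((N + r).toNat) * t ^ ((r * (r - 1) / 2).toNat)
      = (∑ j ∈ range (2 * N + 1), t ^ (j * (j - 1) / 2) * gbc t (2 * N) j * z ^ j) * t ^ TN :=
        hrhs.symm
    _ = (∏ k ∈ range (2 * N), (1 + z * t ^ k)) * t ^ TN := by rw [hqb]
    _ = 2 * QQpart t N * QQpart t (N - 1) := by rw [hlhs]; ring


lemma hne_sub {t : ℂ} (ht : ‖t‖ < 1) : ∀ k : ℕ, 1 - t * t ^ k ≠ 0 := by
  intro k
  rw [← pow_succ' t k]
  exact one_sub_pow_ne ht (Nat.succ_ne_zero k)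

lemma hne_add {t : ℂ} (ht : ‖t‖ < 1) : ∀ k : ℕ, 1 - (-t) * t ^ k ≠ 0 := by
  intro k h
  have h2 : t ^ (k + 1) = -1 := by rw [pow_succ' t k]; linear_combination h
  have h3 : ‖t ^ (k + 1)‖ = 1 := by rw [h2, norm_neg, norm_one]
  rw [norm_pow] at h3
  have h4 : ‖t‖ ^ (k + 1) < 1 := pow_lt_one₀ (norm_nonneg t) ht (by omega)
  linarith

theorem theta_eq_prod (t : ℂ) (ht0 : t ≠ 0) (ht : ‖t‖ < 1) :
    ∑' r : ℤ, t ^ ((r * (r - 1) / 2).toNat)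
      = (∏' k : ℕ, (1 - t * t ^ k)) *
        (2 * (∏' k : ℕ, (1 - (-t) * t ^ k)) * ∏' k : ℕ, (1 - (-t) * t ^ k)) := by
  have ha0 : 0 < ‖t‖ := norm_pos_iff.mpr ht0
  set a : ℝ := ‖t‖ with ha
  set Pinf : ℂ := ∏' k : ℕ, (1 - t * t ^ k) with hPinf
  set Qinf : ℂ := ∏' k : ℕ, (1 - (-t) * t ^ k) with hQinf
  have hPne : Pinf ≠ 0 := tprod_one_sub_ne_zero t t ht (hne_sub ht)
  have htendP : Tendsto (fun n => Ppart t n) atTop (𝓝 Pinf) := by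
    refine (tendsto_prod_one_sub t t ht (hne_sub ht)).congr fun n => ?_
    exact Finset.prod_congr rfl fun k _ => by rw [← pow_succ']
  have htendQ : Tendsto (fun n => QQpart t n) atTop (𝓝 Qinf) := by
    refine (tendsto_prod_one_sub (-t) t ht (hne_add ht)).congr fun n => ?_
    refine Finset.prod_congr rfl fun k _ => ?_
    rw [show (1:ℂ) - (-t) * t ^ k = 1 + t * t ^ k by ring, ← pow_succ']
  set F : ℕ → ℤ → ℂ := fun N r =>
    (if r.natAbs ≤ N then gbc t (2 * N) (((N : ℤ) + r).toNat) else 0) *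
      t ^ ((r * (r - 1) / 2).toNat) with hF
  obtain ⟨c, hc0, hc⟩ := exists_prod_one_sub_lb a ha0.le ht
  set U : ℝ := Real.exp (a / (1 - a)) with hU
  have hU0 : 0 < U := Real.exp_pos _
  have hPub : ∀ m, ‖Ppart t m‖ ≤ U := by
    intro m
    calc ‖Ppart t m‖ ≤ ∏ i ∈ range m, (1 + a ^ (i + 1)) := by
          rw [Ppart, norm_prod]
          refine Finset.prod_le_prod (fun i _ => norm_nonneg _) fun i _ => ?_
          calc ‖1 - t ^ (i + 1)‖ ≤ ‖(1 : ℂ)‖ + ‖t ^ (i + 1)‖ := norm_sub_le _ _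
            _ = 1 + a ^ (i + 1) := by rw [norm_one, norm_pow]
      _ ≤ U := prod_one_add_le_exp a ha0.le ht m
  have hPlb : ∀ m, c ≤ ‖Ppart t m‖ := by
    intro m
    refine (hc m).trans ?_
    rw [Ppart, norm_prod]
    refine Finset.prod_le_prod (fun i _ => ?_) fun i _ => ?_
    · have h5 : a ^ (i + 1) < 1 := pow_lt_one₀ ha0.le ht (by omega); linarith
    · have h1 := norm_sub_norm_le (1 : ℂ) (t ^ (i + 1))
      rw [norm_one, norm_pow] at h1
      exact h1
  have hgbc_div : ∀ n k : ℕ, k ≤ n →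
      gbc t n k = Ppart t n / (Ppart t k * Ppart t (n - k)) := by
    intro n k hk
    rw [eq_div_iff (mul_ne_zero (Ppart_ne_zero ht k) (Ppart_ne_zero ht (n - k)))]
    exact gbc_mul_eq ht n k hk
  set C : ℝ := U / (c * c) with hC
  have hC0 : 0 < C := by positivity
  have hgbc_bound : ∀ n k : ℕ, k ≤ n → ‖gbc t n k‖ ≤ C := by
    intro n k hk
    rw [hgbc_div n k hk, norm_div, norm_mul, hC]
    apply div_le_div₀ hU0.le (hPub n) (by positivity)
    exact mul_le_mul (hPlb k) (hPlb (n - k)) hc0.le (norm_nonneg _)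
  have hbound : ∀ N : ℕ, ∀ r : ℤ, ‖F N r‖ ≤ C * a ^ ((r * (r - 1) / 2).toNat) := by
    intro N r
    simp only [hF, norm_mul, norm_pow]
    rcases le_or_gt r.natAbs N with h | h
    · rw [if_pos h]
      exact mul_le_mul_of_nonneg_right
        (hgbc_bound (2 * N) (((N : ℤ) + r).toNat) (by omega)) (by positivity)
    · rw [if_neg (not_le.mpr h), norm_zero, zero_mul]; positivity
  have hab : ∀ r : ℤ,
      Tendsto (fun N => F N r) atTop (𝓝 (Pinf⁻¹ * t ^ ((r * (r - 1) / 2).toNat))) := by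
    intro r
    have h2N : Tendsto (fun N : ℕ => 2 * N) atTop atTop :=
      tendsto_atTop_atTop.mpr fun b => ⟨b, fun n hn => by omega⟩
    have hplus : Tendsto (fun N : ℕ => ((N : ℤ) + r).toNat) atTop atTop :=
      tendsto_atTop_atTop.mpr fun b => ⟨b + r.natAbs, fun n hn => by omega⟩
    have hminus : Tendsto (fun N : ℕ => ((N : ℤ) - r).toNat) atTop atTop :=
      tendsto_atTop_atTop.mpr fun b => ⟨b + r.natAbs, fun n hn => by omega⟩
    have hlim : Tendsto (fun N : ℕ => Ppart t (2 * N) /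
        (Ppart t (((N : ℤ) + r).toNat) * Ppart t (((N : ℤ) - r).toNat)) *
          t ^ ((r * (r - 1) / 2).toNat)) atTop
        (𝓝 (Pinf / (Pinf * Pinf) * t ^ ((r * (r - 1) / 2).toNat))) := by
      exact (((htendP.comp h2N).div ((htendP.comp hplus).mul (htendP.comp hminus))
        (mul_ne_zero hPne hPne)).mul_const _)
    have hev : (fun N : ℕ => Ppart t (2 * N) /
        (Ppart t (((N : ℤ) + r).toNat) * Ppart t (((N : ℤ) - r).toNat)) *
          t ^ ((r * (r - 1) / 2).toNat)) =ᶠ[atTop] fun N => F N r := by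
      filter_upwards [eventually_ge_atTop r.natAbs] with N hN
      simp only [hF]
      rw [if_pos hN, hgbc_div (2 * N) (((N : ℤ) + r).toNat) (by omega)]
      have : 2 * N - ((N : ℤ) + r).toNat = ((N : ℤ) - r).toNat := by omega
      rw [this]
    have := hlim.congr' hev
    have heq : Pinf / (Pinf * Pinf) = Pinf⁻¹ := by field_simp
    rwa [heq] at this
  have hsumbound : Summable (fun r : ℤ => C * a ^ ((r * (r - 1) / 2).toNat)) :=
    (summable_pow_tri a ha0 ht).mul_left C
  have hTan := tendsto_tsum_of_dominated_convergence hsumbound hab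
    (Eventually.of_forall fun N r => hbound N r)
  have hfin : (fun N : ℕ => ∑' r : ℤ, F N r) =ᶠ[atTop]
      fun N => 2 * QQpart t N * QQpart t (N - 1) := by
    filter_upwards [eventually_ge_atTop 1] with N hN
    have h1 : ∑' r : ℤ, F N r = ∑ r ∈ Finset.Icc (-(N : ℤ)) N, F N r := by
      apply tsum_eq_sum
      intro r hr
      rw [Finset.mem_Icc] at hr
      simp only [hF]
      rw [if_neg (by omega), zero_mul]
    rw [h1, ← finite_jtp t ht0 N hN]
    apply Finset.sum_congr rfl
    intro r hr
    rw [Finset.mem_Icc] at hr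
    simp only [hF]
    rw [if_pos (by omega)]
  have hsub1 : Tendsto (fun N : ℕ => N - 1) atTop atTop :=
    tendsto_atTop_atTop.mpr fun b => ⟨b + 1, fun n hn => by omega⟩
  have hRHS : Tendsto (fun N : ℕ => 2 * QQpart t N * QQpart t (N - 1)) atTop
      (𝓝 (2 * Qinf * Qinf)) :=
    ((htendQ.const_mul 2).mul (htendQ.comp hsub1))
  have huniq : ∑' r : ℤ, Pinf⁻¹ * t ^ ((r * (r - 1) / 2).toNat) = 2 * Qinf * Qinf :=
    tendsto_nhds_unique ((Filter.tendsto_congr' hfin).mp hTan) hRHS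
  rw [tsum_mul_left] at huniq
  have hfinal : ∑' r : ℤ, t ^ ((r * (r - 1) / 2).toNat) = Pinf * (2 * Qinf * Qinf) := by
    rw [← huniq]
    field_simp
  rw [hfinal]


theorem mAL_eval (q : ℂ) (hq0 : q ≠ 0) (hq : ‖q‖ < 1) :
    mAL q (q ^ 2) (-1) = 1 / 2 := by
  have hb0 : 0 < ‖q‖ := norm_pos_iff.mpr hq0
  set b : ℝ := ‖q‖ with hb
  set t : ℂ := q ^ 2 with htdef
  have ht0 : t ≠ 0 := pow_ne_zero 2 hq0
  have ht : ‖t‖ < 1 := by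
    rw [htdef, norm_pow]
    nlinarith
  have ht0' : 0 < ‖t‖ := norm_pos_iff.mpr ht0
  have ht2 : t = q ^ (2 : ℤ) := by
    rw [htdef, show (2 : ℤ) = ((2 : ℕ) : ℤ) by norm_num, zpow_natCast]
  have hne1 : ∀ k : ℕ, (1 : ℂ) - (-1) * t ^ k ≠ 0 := by
    intro k
    rcases Nat.eq_zero_or_pos k with rfl | hk
    · norm_num
    · obtain ⟨m, rfl⟩ := Nat.exists_eq_succ_of_ne_zero (by omega : k ≠ 0)
      have h := hne_add ht m
      rw [show (1 : ℂ) - (-1) * t ^ (m + 1) = 1 - (-t) * t ^ m by rw [pow_succ' t m]; ring]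
      exact h
  set Pinf : ℂ := ∏' k : ℕ, (1 - t * t ^ k) with hPinf
  set Qinf : ℂ := ∏' k : ℕ, (1 - (-t) * t ^ k) with hQinf
  have hPne : Pinf ≠ 0 := tprod_one_sub_ne_zero t t ht (hne_sub ht)
  have hQne : Qinf ≠ 0 := tprod_one_sub_ne_zero (-t) t ht (hne_add ht)
  -- `qPoch (-1) t = 2 * Qinf`
  have hQmin : qPoch (-1) t = 2 * Qinf := by
    have h1 : Tendsto (fun n : ℕ => ∏ k ∈ range n, (1 - (-1) * t ^ k)) atTop
        (𝓝 (qPoch (-1) t)) := tendsto_prod_one_sub (-1) t ht hne1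
    have hsucc : Tendsto (fun m : ℕ => m + 1) atTop atTop :=
      tendsto_atTop_atTop.mpr fun c => ⟨c, fun n hn => by omega⟩
    have h2 : Tendsto (fun m : ℕ => ∏ k ∈ range (m + 1), (1 - (-1) * t ^ k)) atTop
        (𝓝 (qPoch (-1) t)) := h1.comp hsucc
    have htendQ : Tendsto (fun n => QQpart t n) atTop (𝓝 Qinf) := by
      refine (tendsto_prod_one_sub (-t) t ht (hne_add ht)).congr fun n => ?_
      refine Finset.prod_congr rfl fun k _ => ?_
      rw [show (1 : ℂ) - (-t) * t ^ k = 1 + t * t ^ k by ring, ← pow_succ']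
    have h3 : (fun m : ℕ => ∏ k ∈ range (m + 1), (1 - (-1) * t ^ k))
        = fun m : ℕ => 2 * QQpart t m := by
      funext m
      rw [Finset.prod_range_succ' (fun k => 1 - (-1) * t ^ k) m]
      rw [Finset.prod_congr rfl (fun k (_ : k ∈ range m) =>
        show (1 : ℂ) - (-1) * t ^ (k + 1) = 1 + t ^ (k + 1) by ring)]
      simp only [pow_zero]
      rw [QQpart, show (1 : ℂ) - (-1) * 1 = 2 by norm_num]
      ring
    rw [h3] at h2
    exact tendsto_nhds_unique h2 (htendQ.const_mul 2)
  have hjP : jP (-1) t = Pinf * (2 * Qinf * Qinf) := by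
    rw [jP, hQmin]
    have hdiv : t / (-1 : ℂ) = -t := by field_simp
    rw [hdiv, qPoch, qPoch, ← hQinf, ← hPinf]
    ring
  have hTheta : ∑' r : ℤ, t ^ ((r * (r - 1) / 2).toNat) = jP (-1) t := by
    rw [theta_eq_prod t ht0 ht, hjP]
  have hjPne : jP (-1) t ≠ 0 := by
    rw [hjP]
    exact mul_ne_zero hPne (mul_ne_zero (mul_ne_zero two_ne_zero hQne) hQne)
  -- denominators
  set δ : ℝ := min (1 - b) (b⁻¹ - 1) with hδ
  have hbinv : 1 < b⁻¹ := (one_lt_inv₀ hb0).mpr hq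
  have hδ0 : 0 < δ := lt_min (by linarith) (by linarith)
  have hden_lb : ∀ r : ℤ, δ ≤ ‖1 + q ^ (2 * r - 1)‖ := by
    intro r
    rcases le_or_gt 1 r with h | h
    · have hm1 : (1 : ℤ) ≤ 2 * r - 1 := by omega
      set u : ℂ := q ^ (2 * r - 1) with hu
      have hnu : ‖u‖ ≤ b := by
        rw [hu, ← Int.toNat_of_nonneg (by omega : (0:ℤ) ≤ 2 * r - 1), zpow_natCast, norm_pow]
        calc b ^ (2 * r - 1).toNat ≤ b ^ 1 :=
              pow_le_pow_of_le_one hb0.le hq.le (by omega)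
          _ = b := pow_one b
      have h1 : (1 : ℝ) ≤ ‖1 + u‖ + ‖u‖ := by
        calc (1 : ℝ) = ‖(1 + u) - u‖ := by norm_num
          _ ≤ ‖1 + u‖ + ‖u‖ := norm_sub_le _ _
      calc δ ≤ 1 - b := min_le_left _ _
        _ ≤ ‖1 + u‖ := by linarith
    · have hm1 : (1 : ℤ) ≤ 1 - 2 * r := by omega
      set u : ℂ := q ^ (2 * r - 1) with hu
      have hnu : b⁻¹ ≤ ‖u‖ := by
        rw [hu, show 2 * r - 1 = -(1 - 2 * r) by ring, zpow_neg,
          ← Int.toNat_of_nonneg (by omega : (0:ℤ) ≤ 1 - 2 * r), zpow_natCast, norm_inv, norm_pow]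
        have hle : b ^ (1 - 2 * r).toNat ≤ b := by
          calc b ^ (1 - 2 * r).toNat ≤ b ^ 1 :=
                pow_le_pow_of_le_one hb0.le hq.le (by omega)
            _ = b := pow_one b
        exact (inv_anti₀ (pow_pos hb0 _) hle)
      have h1 : ‖u‖ ≤ ‖1 + u‖ + 1 := by
        calc ‖u‖ = ‖(1 + u) - 1‖ := by norm_num
          _ ≤ ‖1 + u‖ + ‖(1 : ℂ)‖ := norm_sub_le _ _
          _ = ‖1 + u‖ + 1 := by rw [norm_one]
      calc δ ≤ b⁻¹ - 1 := min_le_right _ _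
        _ ≤ ‖1 + u‖ := by linarith
  have hden_ne : ∀ r : ℤ, (1 : ℂ) + q ^ (2 * r - 1) ≠ 0 := by
    intro r h
    have := hden_lb r
    rw [h, norm_zero] at this
    linarith
  -- the summand
  set f : ℤ → ℂ := fun r => t ^ ((r * (r - 1) / 2).toNat) / (1 + q ^ (2 * r - 1)) with hf
  have hfeq : ∀ r : ℤ, ((-1 : ℂ) ^ r * t ^ (r * (r - 1) / 2) * (-1 : ℂ) ^ r) /
      (1 - t ^ (r - 1) * q * (-1)) = f r := by
    intro r
    have hnum : ((-1 : ℂ) ^ r * t ^ (r * (r - 1) / 2) * (-1 : ℂ) ^ r)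
        = t ^ ((r * (r - 1) / 2).toNat) := by
      have h1 : ((-1 : ℂ) ^ r * (-1 : ℂ) ^ r) = 1 := by
        rw [← mul_zpow]
        norm_num
      calc (-1 : ℂ) ^ r * t ^ (r * (r - 1) / 2) * (-1 : ℂ) ^ r
          = t ^ (r * (r - 1) / 2) * ((-1 : ℂ) ^ r * (-1 : ℂ) ^ r) := by ring
        _ = t ^ (r * (r - 1) / 2) := by rw [h1, mul_one]
        _ = t ^ ((r * (r - 1) / 2).toNat) := by
            rw [← zpow_natCast t ((r * (r - 1) / 2).toNat),
              Int.toNat_of_nonneg (int_tri_nonneg r)]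
    have hden : (1 : ℂ) - t ^ (r - 1) * q * (-1) = 1 + q ^ (2 * r - 1) := by
      have h2 : t ^ (r - 1) * q = q ^ (2 * r - 1) := by
        rw [ht2, ← zpow_mul, ← zpow_add_one₀ hq0]
        congr 1
        ring
      rw [show (1 : ℂ) - t ^ (r - 1) * q * (-1) = 1 + t ^ (r - 1) * q by ring, h2]
    rw [hnum, hden, hf]
  -- summability of f
  have hsumf : Summable f := by
    apply Summable.of_norm_bounded
      (g := fun r : ℤ => δ⁻¹ * ‖t‖ ^ ((r * (r - 1) / 2).toNat))
      ((summable_pow_tri ‖t‖ ht0' ht).mul_left δ⁻¹)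
    intro r
    simp only [hf, norm_div, norm_pow]
    calc ‖t‖ ^ ((r * (r - 1) / 2).toNat) / ‖1 + q ^ (2 * r - 1)‖
        ≤ ‖t‖ ^ ((r * (r - 1) / 2).toNat) / δ := by
          gcongr
          exact hden_lb r
      _ = δ⁻¹ * ‖t‖ ^ ((r * (r - 1) / 2).toNat) := by rw [div_eq_inv_mul]
  -- pairing
  have hpair : ∀ r : ℤ, f r + f (1 - r) = t ^ ((r * (r - 1) / 2).toNat) := by
    intro r
    have hEeq : ((1 - r) * ((1 - r) - 1) / 2) = (r * (r - 1) / 2) := by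
      rw [show (1 - r) * ((1 - r) - 1) = r * (r - 1) by ring]
    have hexp : 2 * (1 - r) - 1 = -(2 * r - 1) := by ring
    have hu0 : q ^ (2 * r - 1) ≠ 0 := zpow_ne_zero _ hq0
    have h1 : (1 : ℂ) + q ^ (2 * r - 1) ≠ 0 := hden_ne r
    have h2 : (1 : ℂ) + (q ^ (2 * r - 1))⁻¹ ≠ 0 := by
      have := hden_ne (1 - r)
      rwa [hexp, zpow_neg] at this
    simp only [hf]
    rw [hEeq, hexp, zpow_neg]
    set X : ℂ := t ^ ((r * (r - 1) / 2).toNat) with hX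
    set u : ℂ := q ^ (2 * r - 1) with hu
    have h3 : 1 + u⁻¹ = (1 + u) / u := by
      rw [eq_div_iff hu0, add_mul, one_mul, inv_mul_cancel₀ hu0, add_comm]
    rw [h3, div_div_eq_mul_div, ← add_div, div_eq_iff h1]
    ring
  -- the tsum
  have hsum2 : Summable fun r : ℤ => f (1 - r) :=
    hsumf.comp_injective (Equiv.subLeft (1 : ℤ)).injective
  have hS1 : ∑' r : ℤ, f (1 - r) = ∑' r : ℤ, f r := (Equiv.subLeft (1 : ℤ)).tsum_eq f
  have h2S : (∑' r : ℤ, f r) + (∑' r : ℤ, f (1 - r)) = ∑' r : ℤ, (f r + f (1 - r)) :=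
    (Summable.tsum_add hsumf hsum2).symm
  rw [hS1, tsum_congr hpair, hTheta] at h2S
  -- conclude
  rw [mAL, tsum_congr hfeq]
  have hSval : (∑' r : ℤ, f r) = jP (-1) t / 2 := by
    have : (2 : ℂ) ≠ 0 := two_ne_zero
    field_simp
    linear_combination h2S
  rw [hSval]
  field_simp
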